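/- Let θ ∈ (0,∞) with θ ≠ 1/2 and θ ≠ 1, and let α be the unique real number with α³ = 6/(θ(1−θ)). For each λ ∈ (0,1) let c(λ) be the unique zero of f_λ(c) = (c/((2θ−1+2cθ)(2−2θ−c(2θ−1))))^((1−θ)/(θ−1/2)) − (2θ−1+2cθ)²/(1−λ) in I(θ). Then, as λ → 0⁺, c(λ) − [ (1−θ)/θ + ((1−θ)/(2θ))·α·λ^(1/3) + ((1−θ)²/(4θ))·α²·λ^(2/3) − (1/(40θ))(θ−2)(θ−1)(3θ−2)·α³·λ ] = O(λ^(4/3)). -/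

import Mathlib

open Real Asymptotics Filter

/-- The interval `I(θ)` in which the root `c` of `f` is located. -/
noncomputable def noTradeInterval (θ : ℝ) : Set ℝ :=
  if θ < 1/2 then Set.Ioi ((1 - θ)/θ)
  else if θ < 1 then Set.Ioo ((1 - θ)/θ) ((1 - θ)/(θ - 1/2))
  else Set.Ioo ((1 - θ)/θ) 0

namespace GOC

lemma logTaylor5 (y : ℝ) (hy : |y| ≤ 1/2) :
    |Real.log (1+y) - (y - y^2/2 + y^3/3 - y^4/4 + y^5/5)| ≤ 2*|y|^6 := by
  have h1 : |(-y)| < 1 := by rw [abs_neg]; linarith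
  have h := Real.abs_log_sub_add_sum_range_le h1 5
  have hs : (∑ i ∈ Finset.range 5, (-y) ^ (i + 1) / (i + 1)) =
      -(y - y^2/2 + y^3/3 - y^4/4 + y^5/5) := by
    simp [Finset.sum_range_succ]
    ring
  rw [hs, abs_neg, show (1 : ℝ) - -y = 1 + y by ring] at h
  have h2 : |Real.log (1+y) - (y - y^2/2 + y^3/3 - y^4/4 + y^5/5)|
      = |-(y - y^2/2 + y^3/3 - y^4/4 + y^5/5) + Real.log (1+y)| := by
    rw [show -(y - y^2/2 + y^3/3 - y^4/4 + y^5/5) + Real.log (1+y)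
        = Real.log (1+y) - (y - y^2/2 + y^3/3 - y^4/4 + y^5/5) by ring]
  rw [h2]
  refine h.trans ?_
  rw [abs_neg] at h1
  have hy6 : (0:ℝ) ≤ |y|^6 := by positivity
  rw [div_le_iff₀ (by linarith)]
  have h3 : |y| ^ (5+1) = |y|^6 := by norm_num
  rw [h3]
  nlinarith [mul_nonneg hy6 (by linarith : (0:ℝ) ≤ 1 - 2*|y|)]

set_option maxHeartbeats 1000000 in
noncomputable def sPoly (b3 b4 b5 k1 k2 k3 E x : ℝ) : ℝ :=
  (5*b5*k1^4*k2 + 6*b4*k1^2*k2^2 + 4*b4*k1^3*k3 + b3*k2^3 + 6*b3*k1*k2*k3 + 3*b3*k1^2*E) + (10*b5*k1^3*k2^2 + 5*b5*k1^4*k3 + 4*b4*k1*k2^3 + 12*b4*k1^2*k2*k3 + 4*b4*k1^3*E + 3*b3*k2^2*k3 + 3*b3*k1*k3^2 + 6*b3*k1*k2*E)*x + (10*b5*k1^2*k2^3 + 20*b5*k1^3*k2*k3 + 5*b5*k1^4*E + b4*k2^4 + 12*b4*k1*k2^2*k3 + 6*b4*k1^2*k3^2 + 12*b4*k1^2*k2*E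 + 3*b3*k2*k3^2 + 3*b3*k2^2*E + 6*b3*k1*k3*E)*x^2 + (5*b5*k1*k2^4 + 30*b5*k1^2*k2^2*k3 + 10*b5*k1^3*k3^2 + 20*b5*k1^3*k2*E + 4*b4*k2^3*k3 + 12*b4*k1*k2*k3^2 + 12*b4*k1*k2^2*E + 12*b4*k1^2*k3*E + b3*k3^3 + 6*b3*k2*k3*E + 3*b3*k1*E^2)*x^3 + (b5*k2^5 + 20*b5*k1*k2^3*k3 + 30*b5*k1^2*k2*k3^2 + 30*b5*k1^2*k2^2*E + 20*b5*k1^3*k3*E + 6*b4*k2^2*k3^2 + 4*b4*k2^3*E + 4*b4*k1*k3^3 + 24*b4*k1*k2*k3*E + 6*b4*k1^2*E^2 + 3*b3*k3^2*E + 3*b3*k2*E^2)*x^4 + (5*b5*k2^4*k3 + 30*b5*k1*k2^2*k3^2 + 20*b5*k1*k2^3*E + 10*b5*k1^2*k3^3 + 60*b5*k1^2*k2*k3*E + 10*b5*k1^3*E^2 + 4*b4*k2*k3^3 + 12*b4*k2^2*k3*E + 12*b4*k1*k3^2*E + 12*b4*k1*k2*E^2 + 3*b3*k3*E^2)*x^5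 + (10*b5*k2^3*k3^2 + 5*b5*k2^4*E + 20*b5*k1*k2*k3^3 + 60*b5*k1*k2^2*k3*E + 30*b5*k1^2*k3^2*E + 30*b5*k1^2*k2*E^2 + b4*k3^4 + 12*b4*k2*k3^2*E + 6*b4*k2^2*E^2 + 12*b4*k1*k3*E^2 + b3*E^3)*x^6 + (10*b5*k2^2*k3^3 + 20*b5*k2^3*k3*E + 5*b5*k1*k3^4 + 60*b5*k1*k2*k3^2*E + 30*b5*k1*k2^2*E^2 + 30*b5*k1^2*k3*E^2 + 4*b4*k3^3*E + 12*b4*k2*k3*E^2 + 4*b4*k1*E^3)*x^7 + (5*b5*k2*k3^4 + 30*b5*k2^2*k3^2*E + 10*b5*k2^3*E^2 + 20*b5*k1*k3^3*E + 60*b5*k1*k2*k3*E^2 + 10*b5*k1^2*E^3 + 6*b4*k3^2*E^2 + 4*b4*k2*E^3)*x^8 + (b5*k3^5 + 20*b5*k2*k3^3*E + 30*b5*k2^2*k3*E^2 + 30*b5*k1*k3^2*E^2 + 20*b5*k1*k2*E^3 + 4*b4*k3*E^3)*x^9 + (5*b5*k3^4*E + 30*b5*k2*k3^2*E^2 + 10*b5*k2^2*E^3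 + 20*b5*k1*k3*E^3 + b4*E^4)*x^10 + (10*b5*k3^3*E^2 + 20*b5*k2*k3*E^3 + 5*b5*k1*E^4)*x^11 + (10*b5*k3^2*E^3 + 5*b5*k2*E^4)*x^12 + (5*b5*k3*E^4)*x^13 + (b5*E^5)*x^14

set_option maxHeartbeats 1000000 in
lemma phi_factor (b3 b4 b5 k1 k2 k3 E x : ℝ)
    (h1 : b3*k1^3 = -1)
    (h2 : 3*b3*k1^2*k2 + b4*k1^4 = 0)
    (h3 : 3*b3*k1^2*k3 + 3*b3*k1*k2^2 + 4*b4*k1^3*k2 + b5*k1^5 = 0) :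
    b3*(x*(k1+k2*x+k3*x^2+E*x^3))^3 + b4*(x*(k1+k2*x+k3*x^2+E*x^3))^4
      + b5*(x*(k1+k2*x+k3*x^2+E*x^3))^5 + x^3
    = x^6 * sPoly b3 b4 b5 k1 k2 k3 E x := by
  unfold sPoly
  linear_combination x^3*h1 + x^4*h2 + x^5*h3

set_option maxHeartbeats 1000000 in
lemma sPoly_cont (b3 b4 b5 k1 k2 k3 E : ℝ) :
    Continuous (fun x => sPoly b3 b4 b5 k1 k2 k3 E x) := by
  unfold sPoly; fun_prop

set_option maxHeartbeats 1000000 in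
lemma sPoly_zero (b3 b4 b5 k1 k2 k3 E : ℝ) : sPoly b3 b4 b5 k1 k2 k3 E 0 =
    3*b3*k1^2*E + (6*b3*k1*k2*k3 + b3*k2^3 + 4*b4*k1^3*k3 + 6*b4*k1^2*k2^2 + 5*b5*k1^4*k2) := by
  unfold sPoly; ring

lemma convex_affine_pos (a : ℝ) : Convex ℝ {v : ℝ | 0 < 1 + a*v} := by
  have h : {v : ℝ | 0 < 1 + a*v} = {v : ℝ | (-a)*v < 1} := by
    ext v; simp only [Set.mem_setOf_eq]; constructor <;> intro <;> nlinarith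
  rw [h]
  exact convex_halfSpace_lt
    (IsLinearMap.mk (fun x y => by ring) (fun c x => by simp [smul_eq_mul]; ring)) 1

lemma isOpen_affine_pos (a : ℝ) : IsOpen {v : ℝ | 0 < 1 + a*v} :=
  isOpen_lt continuous_const (by fun_prop)

lemma hasDerivAt_log_affine (a v : ℝ) (h : 1 + a*v ≠ 0) :
    HasDerivAt (fun t => Real.log (1 + a*t)) (a/(1+a*v)) v := by
  have h1 : HasDerivAt (fun t : ℝ => 1 + a*t) a v := by
    simpa using ((hasDerivAt_id v).const_mul a).const_add 1
  have := (Real.hasDerivAt_log h).comp v h1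
  simpa [div_eq_inv_mul, Function.comp_def] using this

/- constants -/
noncomputable def pc (θ : ℝ) : ℝ := 2*(1-θ)/(2*θ-1)
noncomputable def sc (θ : ℝ) : ℝ := θ/(1-θ)
noncomputable def c0 (θ : ℝ) : ℝ := (1-θ)/θ
noncomputable def a1 (θ : ℝ) : ℝ := 2*θ
noncomputable def a2 (θ : ℝ) : ℝ := -((2*θ-1) * sc θ)
noncomputable def a3 (θ : ℝ) : ℝ := sc θ
noncomputable def g1 (θ : ℝ) : ℝ := 2 + pc θ
noncomputable def g2 (θ : ℝ) : ℝ := pc θ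
noncomputable def g3 (θ : ℝ) : ℝ := -(pc θ)
noncomputable def b3 (θ : ℝ) : ℝ := (g1 θ*(a1 θ)^3 + g2 θ*(a2 θ)^3 + g3 θ*(a3 θ)^3)/3
noncomputable def b4 (θ : ℝ) : ℝ := -(g1 θ*(a1 θ)^4 + g2 θ*(a2 θ)^4 + g3 θ*(a3 θ)^4)/4
noncomputable def b5 (θ : ℝ) : ℝ := (g1 θ*(a1 θ)^5 + g2 θ*(a2 θ)^5 + g3 θ*(a3 θ)^5)/5
noncomputable def k1 (θ α : ℝ) : ℝ := (1-θ)/(2*θ)*α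
noncomputable def k2 (θ α : ℝ) : ℝ := (1-θ)^2/(4*θ)*α^2
noncomputable def k3 (θ α : ℝ) : ℝ := -(1/(40*θ) * (θ-2) * (θ-1) * (3*θ-2) * α^3)
noncomputable def del (θ : ℝ) : ℝ := (1/2)/(1+ abs (a1 θ) + abs (a2 θ) + abs (a3 θ))
noncomputable def Kc (θ : ℝ) : ℝ := 2*(abs (g1 θ)*(a1 θ)^6 + abs (g2 θ)*(a2 θ)^6 + abs (g3 θ)*(a3 θ)^6)
noncomputable def ell (θ : ℝ) (v : ℝ) : ℝ :=
  g1 θ * Real.log (1+a1 θ*v) + g2 θ * Real.log (1+a2 θ*v) + g3 θ * Real.log (1+a3 θ*v)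
noncomputable def Vset (θ : ℝ) : Set ℝ :=
  Set.Ici 0 ∩ ({v : ℝ | 0 < 1+a1 θ*v} ∩ ({v : ℝ | 0 < 1+a2 θ*v} ∩ {v : ℝ | 0 < 1+a3 θ*v}))
noncomputable def d6 (θ α : ℝ) : ℝ :=
  6*b3 θ*k1 θ α*k2 θ α*k3 θ α + b3 θ*(k2 θ α)^3 + 4*b4 θ*(k1 θ α)^3*k3 θ α
    + 6*b4 θ*(k1 θ α)^2*(k2 θ α)^2 + 5*b5 θ*(k1 θ α)^4*k2 θ α
noncomputable def CC (θ α : ℝ) : ℝ :=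
  (abs (d6 θ α) + Kc θ*(k1 θ α)^6 + 3)/(3*(-(b3 θ))*(k1 θ α)^2)

section Algebra

variable {θ α : ℝ} (hθ : 0 < θ) (h1θ : (1:ℝ) - θ ≠ 0) (hw : 2*θ - 1 ≠ 0)

include hθ h1θ hw

lemma hθ0 : θ ≠ 0 := ne_of_gt hθ

lemma b3v : b3 θ = -(4*θ^4)/(3*(1-θ)^2) := by
  rw [b3, g1, g2, g3, a1, a2, a3, sc, pc]
  field_simp [ne_of_gt hθ]
  ring

lemma b4v : b4 θ = 4*θ^5/(1-θ)^2 := by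
  rw [b4, g1, g2, g3, a1, a2, a3, sc, pc]
  field_simp [ne_of_gt hθ]
  ring

lemma b5v : b5 θ = -(4*θ^6*(12*θ^2-22*θ+11))/(5*(1-θ)^4) := by
  rw [b5, g1, g2, g3, a1, a2, a3, sc, pc]
  field_simp [ne_of_gt hθ]
  ring

lemma e1van : g1 θ*a1 θ + g2 θ*a2 θ + g3 θ*a3 θ = 0 := by
  rw [g1, g2, g3, a1, a2, a3, sc, pc]
  field_simp
  ring

lemma e2van : g1 θ*(a1 θ)^2 + g2 θ*(a2 θ)^2 + g3 θ*(a3 θ)^2 = 0 := by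
  rw [g1, g2, g3, a1, a2, a3, sc, pc]
  field_simp [ne_of_gt hθ]
  ring

lemma k1cube (hα : α^3 = 6/(θ*(1 - θ))) : (k1 θ α)^3 = 3*(1-θ)^2/(4*θ^4) := by
  rw [k1, mul_pow, hα]
  field_simp [ne_of_gt hθ]
  ring

lemma cond1 (hα : α^3 = 6/(θ*(1 - θ))) : b3 θ*(k1 θ α)^3 = -1 := by
  rw [b3v hθ h1θ hw, k1cube hθ h1θ hw hα]
  field_simp [ne_of_gt hθ]

lemma cond2 : 3*b3 θ*(k1 θ α)^2*k2 θ α + b4 θ*(k1 θ α)^4 = 0 := by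
  rw [b3v hθ h1θ hw, b4v hθ h1θ hw, k1, k2]
  field_simp [ne_of_gt hθ]
  ring

lemma cond3 : 3*b3 θ*(k1 θ α)^2*k3 θ α + 3*b3 θ*k1 θ α*(k2 θ α)^2
    + 4*b4 θ*(k1 θ α)^3*k2 θ α + b5 θ*(k1 θ α)^5 = 0 := by
  rw [b3v hθ h1θ hw, b4v hθ h1θ hw, b5v hθ h1θ hw, k1, k2, k3]
  field_simp [ne_of_gt hθ]
  ring

lemma sq1θ : 0 < (1-θ)^2 := by
  rcases lt_or_gt_of_ne h1θ with h|h <;> nlinarith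

lemma b3neg : b3 θ < 0 := by
  rw [b3v hθ h1θ hw]
  have h4 : 0 < θ^4 := by positivity
  have h2 : 0 < (1-θ)^2 := sq1θ hθ h1θ hw
  apply div_neg_of_neg_of_pos <;> nlinarith

lemma k1pos (hα : α^3 = 6/(θ*(1 - θ))) : 0 < k1 θ α := by
  by_contra h
  push_neg at h
  have h3 : (k1 θ α)^3 ≤ 0 := Odd.pow_nonpos ⟨1, by norm_num⟩ h
  rw [k1cube hθ h1θ hw hα] at h3
  have h4 : 0 < θ^4 := by positivity
  have h2 : 0 < (1-θ)^2 := sq1θ hθ h1θ hw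
  nlinarith [div_pos (by nlinarith : (0:ℝ) < 3*(1-θ)^2) (by nlinarith : (0:ℝ) < 4*θ^4)]

lemma s0 : sc θ ≠ 0 := by rw [sc]; exact div_ne_zero (ne_of_gt hθ) h1θ

end Algebra

section Analytic

variable {θ : ℝ}

lemma hasDerivAt_ell (hθ : 0 < θ) (h1θ : (1:ℝ) - θ ≠ 0) (hw : 2*θ - 1 ≠ 0) (v : ℝ)
    (h1 : 0 < 1+a1 θ*v) (h2 : 0 < 1+a2 θ*v) (h3 : 0 < 1+a3 θ*v) :
    HasDerivAt (ell θ)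
      (g1 θ*(a1 θ/(1+a1 θ*v)) + g2 θ*(a2 θ/(1+a2 θ*v)) + g3 θ*(a3 θ/(1+a3 θ*v))) v := by
  unfold ell
  exact (((hasDerivAt_log_affine (a1 θ) v h1.ne').const_mul (g1 θ)).add
    ((hasDerivAt_log_affine (a2 θ) v h2.ne').const_mul (g2 θ))).add
    ((hasDerivAt_log_affine (a3 θ) v h3.ne').const_mul (g3 θ))

lemma ell_deriv_neg (hθ : 0 < θ) (h1θ : (1:ℝ) - θ ≠ 0) (hw : 2*θ - 1 ≠ 0) (v : ℝ)
    (h1 : 0 < 1+a1 θ*v) (h2 : 0 < 1+a2 θ*v) (h3 : 0 < 1+a3 θ*v) (hv0 : v ≠ 0) :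
    g1 θ*(a1 θ/(1+a1 θ*v)) + g2 θ*(a2 θ/(1+a2 θ*v)) + g3 θ*(a3 θ/(1+a3 θ*v)) < 0 := by
  have hθ0 : θ ≠ 0 := ne_of_gt hθ
  have hkey : g1 θ*(a1 θ/(1+a1 θ*v)) + g2 θ*(a2 θ/(1+a2 θ*v)) + g3 θ*(a3 θ/(1+a3 θ*v))
      = -(4*θ^2*(sc θ)^2*v^2)/((1+a1 θ*v)*(1+a2 θ*v)*(1+a3 θ*v)) := by
    simp only [g1, g2, g3, a1, a2, a3, sc, pc] at h1 h2 h3 ⊢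
    have e2 : 1 + -((2*θ-1)*(θ/(1-θ)))*v = (1-θ - (2*θ-1)*θ*v)/(1-θ) := by
      field_simp; ring
    have e3 : 1+(θ/(1-θ))*v = (1-θ+θ*v)/(1-θ) := by field_simp
    have hn2 : 1-θ - (2*θ-1)*θ*v ≠ 0 := by
      intro h; rw [e2, h] at h2; simp at h2
    have hn3 : 1-θ+θ*v ≠ 0 := by
      intro h; rw [e3, h] at h3; simp at h3
    rw [e2, e3]
    generalize hD : 1-θ - (2*θ-1)*θ*v = D at hn2 ⊢
    field_simp [h1.ne', hn2, hn3]
    rw [← hD]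
    ring
  rw [hkey]
  apply div_neg_of_neg_of_pos
  · have hs2 : 0 < (sc θ)^2 :=
      lt_of_le_of_ne (sq_nonneg _) (Ne.symm (pow_ne_zero 2 (s0 hθ h1θ hw)))
    have hv2 : 0 < v^2 := lt_of_le_of_ne (sq_nonneg _) (Ne.symm (pow_ne_zero 2 hv0))
    have hθ2 : 0 < θ^2 := lt_of_le_of_ne (sq_nonneg _) (Ne.symm (pow_ne_zero 2 hθ0))
    rw [show 4*θ^2*(sc θ)^2*v^2 = 4*(θ^2*((sc θ)^2*v^2)) by ring]
    have := mul_pos (by norm_num : (0:ℝ) < 4) (mul_pos hθ2 (mul_pos hs2 hv2))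
    linarith
  · exact mul_pos (mul_pos h1 h2) h3

lemma Vset_facts {v : ℝ} (hv : v ∈ Vset θ) :
    0 ≤ v ∧ 0 < 1+a1 θ*v ∧ 0 < 1+a2 θ*v ∧ 0 < 1+a3 θ*v := by
  unfold Vset at hv
  exact ⟨hv.1, hv.2.1, hv.2.2.1, hv.2.2.2⟩

lemma mem_Vset {v : ℝ} (h0 : 0 ≤ v) (h1 : 0 < 1+a1 θ*v) (h2 : 0 < 1+a2 θ*v)
    (h3 : 0 < 1+a3 θ*v) : v ∈ Vset θ := by
  unfold Vset
  exact ⟨h0, h1, h2, h3⟩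

lemma ell_anti (hθ : 0 < θ) (h1θ : (1:ℝ) - θ ≠ 0) (hw : 2*θ - 1 ≠ 0) :
    StrictAntiOn (ell θ) (Vset θ) := by
  apply strictAntiOn_of_deriv_neg
  · exact ((convex_Ici 0).inter (((convex_affine_pos (a1 θ)).inter
      ((convex_affine_pos (a2 θ)).inter (convex_affine_pos (a3 θ))))))
  · intro v hv
    obtain ⟨h0, h1, h2, h3⟩ := Vset_facts hv
    exact ((hasDerivAt_ell hθ h1θ hw v h1 h2 h3).continuousAt).continuousWithinAt
  · intro v hv
    rw [Vset, interior_inter, interior_Ici,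
      (((isOpen_affine_pos (a1 θ)).inter ((isOpen_affine_pos (a2 θ)).inter
        (isOpen_affine_pos (a3 θ))))).interior_eq] at hv
    have hv0 := hv.1
    have h1 := hv.2.1
    have h2 := hv.2.2.1
    have h3 := hv.2.2.2
    rw [(hasDerivAt_ell hθ h1θ hw v h1 h2 h3).deriv]
    exact ell_deriv_neg hθ h1θ hw v h1 h2 h3 (ne_of_gt hv0)

lemma ell_zero : ell θ 0 = 0 := by simp [ell]

lemma del_pos : 0 < del θ := by
  rw [del]; positivity

lemma abs_mul_del (a v : ℝ) (hb : abs a ≤ 1 + abs (a1 θ) + abs (a2 θ) + abs (a3 θ))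
    (h0 : 0 ≤ v) (hv : v ≤ del θ) : abs (a*v) ≤ 1/2 := by
  rw [abs_mul, abs_of_nonneg h0]
  have hD : (0:ℝ) < 1 + abs (a1 θ) + abs (a2 θ) + abs (a3 θ) := by positivity
  rw [del] at hv
  calc abs a * v ≤ (1 + abs (a1 θ) + abs (a2 θ) + abs (a3 θ)) * ((1/2)/(1 + abs (a1 θ) + abs (a2 θ) + abs (a3 θ))) := by
        apply mul_le_mul hb hv h0 hD.le
    _ = 1/2 := by field_simp
  
lemma abs_a1_del {v : ℝ} (h0 : 0 ≤ v) (hv : v ≤ del θ) : abs (a1 θ*v) ≤ 1/2 :=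
  abs_mul_del _ _ (by nlinarith [abs_nonneg (a2 θ), abs_nonneg (a3 θ)]) h0 hv

lemma abs_a2_del {v : ℝ} (h0 : 0 ≤ v) (hv : v ≤ del θ) : abs (a2 θ*v) ≤ 1/2 :=
  abs_mul_del _ _ (by nlinarith [abs_nonneg (a1 θ), abs_nonneg (a3 θ)]) h0 hv

lemma abs_a3_del {v : ℝ} (h0 : 0 ≤ v) (hv : v ≤ del θ) : abs (a3 θ*v) ≤ 1/2 :=
  abs_mul_del _ _ (by nlinarith [abs_nonneg (a1 θ), abs_nonneg (a2 θ)]) h0 hv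

lemma mem_Vset_of_le_del {v : ℝ} (h0 : 0 ≤ v) (hv : v ≤ del θ) : v ∈ Vset θ := by
  refine mem_Vset h0 ?_ ?_ ?_
  · have := abs_a1_del h0 hv
    have := neg_abs_le (a1 θ*v)
    linarith
  · have := abs_a2_del h0 hv
    have := neg_abs_le (a2 θ*v)
    linarith
  · have := abs_a3_del h0 hv
    have := neg_abs_le (a3 θ*v)
    linarith

lemma abs_pow6 (a : ℝ) : |a|^6 = a^6 := by
  rw [show (6:ℕ) = 2*3 by rfl, pow_mul, pow_mul, sq_abs]

set_option maxHeartbeats 1000000 in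
lemma ell_taylor (hθ : 0 < θ) (h1θ : (1:ℝ) - θ ≠ 0) (hw : 2*θ - 1 ≠ 0) (v : ℝ)
    (h0 : 0 ≤ v) (hv : v ≤ del θ) :
    |ell θ v - (b3 θ*v^3 + b4 θ*v^4 + b5 θ*v^5)| ≤ Kc θ*v^6 := by
  have t1 := logTaylor5 (a1 θ*v) (abs_a1_del h0 hv)
  have t2 := logTaylor5 (a2 θ*v) (abs_a2_del h0 hv)
  have t3 := logTaylor5 (a3 θ*v) (abs_a3_del h0 hv)
  have he1 := e1van hθ h1θ hw
  have he2 := e2van hθ h1θ hw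
  have hbr : g1 θ*(a1 θ*v - (a1 θ*v)^2/2 + (a1 θ*v)^3/3 - (a1 θ*v)^4/4 + (a1 θ*v)^5/5)
      + g2 θ*(a2 θ*v - (a2 θ*v)^2/2 + (a2 θ*v)^3/3 - (a2 θ*v)^4/4 + (a2 θ*v)^5/5)
      + g3 θ*(a3 θ*v - (a3 θ*v)^2/2 + (a3 θ*v)^3/3 - (a3 θ*v)^4/4 + (a3 θ*v)^5/5)
      = b3 θ*v^3 + b4 θ*v^4 + b5 θ*v^5 := by
    rw [b3, b4, b5]
    linear_combination v*he1 - v^2/2*he2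
  have hsplit : ell θ v - (b3 θ*v^3 + b4 θ*v^4 + b5 θ*v^5)
      = g1 θ*(Real.log (1+a1 θ*v) - (a1 θ*v - (a1 θ*v)^2/2 + (a1 θ*v)^3/3 - (a1 θ*v)^4/4 + (a1 θ*v)^5/5))
      + g2 θ*(Real.log (1+a2 θ*v) - (a2 θ*v - (a2 θ*v)^2/2 + (a2 θ*v)^3/3 - (a2 θ*v)^4/4 + (a2 θ*v)^5/5))
      + g3 θ*(Real.log (1+a3 θ*v) - (a3 θ*v - (a3 θ*v)^2/2 + (a3 θ*v)^3/3 - (a3 θ*v)^4/4 + (a3 θ*v)^5/5)) := by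
    rw [← hbr]; unfold ell; ring
  rw [hsplit]
  have hb1 : |g1 θ*(Real.log (1+a1 θ*v) - (a1 θ*v - (a1 θ*v)^2/2 + (a1 θ*v)^3/3 - (a1 θ*v)^4/4 + (a1 θ*v)^5/5))|
      ≤ abs (g1 θ) * (2*((a1 θ)^6*v^6)) := by
    rw [abs_mul]
    apply mul_le_mul_of_nonneg_left _ (abs_nonneg _)
    refine t1.trans ?_
    rw [show 2*|a1 θ*v|^6 = 2*(|a1 θ*v|^6) by ring, abs_pow6, mul_pow]
  have hb2 : |g2 θ*(Real.log (1+a2 θ*v) - (a2 θ*v - (a2 θ*v)^2/2 + (a2 θ*v)^3/3 - (a2 θ*v)^4/4 + (a2 θ*v)^5/5))|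
      ≤ abs (g2 θ) * (2*((a2 θ)^6*v^6)) := by
    rw [abs_mul]
    apply mul_le_mul_of_nonneg_left _ (abs_nonneg _)
    refine t2.trans ?_
    rw [show 2*|a2 θ*v|^6 = 2*(|a2 θ*v|^6) by ring, abs_pow6, mul_pow]
  have hb3 : |g3 θ*(Real.log (1+a3 θ*v) - (a3 θ*v - (a3 θ*v)^2/2 + (a3 θ*v)^3/3 - (a3 θ*v)^4/4 + (a3 θ*v)^5/5))|
      ≤ abs (g3 θ) * (2*((a3 θ)^6*v^6)) := by
    rw [abs_mul]
    apply mul_le_mul_of_nonneg_left _ (abs_nonneg _)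
    refine t3.trans ?_
    rw [show 2*|a3 θ*v|^6 = 2*(|a3 θ*v|^6) by ring, abs_pow6, mul_pow]
  refine le_trans (abs_add_le _ _) ?_
  refine le_trans (add_le_add_left (abs_add_le _ _) _) ?_
  refine le_trans (add_le_add (add_le_add hb1 hb2) hb3) ?_
  exact le_of_eq (by rw [Kc]; ring)

lemma c0_ne (hθ : 0 < θ) (h1θ : (1:ℝ) - θ ≠ 0) : c0 θ ≠ 0 :=
  div_ne_zero h1θ (ne_of_gt hθ)

set_option maxHeartbeats 1000000 in
lemma eq_to_ell (hθ : 0 < θ) (h1θ : (1:ℝ) - θ ≠ 0) (hw : 2*θ - 1 ≠ 0)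
    {lam cv : ℝ} (hlam1 : lam < 1)
    (h1 : 0 < 1 + a1 θ*(cv - c0 θ)) (h2 : 0 < 1 + a2 θ*(cv - c0 θ))
    (h3 : 0 < 1 + a3 θ*(cv - c0 θ))
    (heq : (cv / ((2*θ - 1 + 2*cv*θ) * (2 - 2*θ - cv*(2*θ - 1)))) ^ ((1 - θ)/(θ - 1/2))
        - (2*θ - 1 + 2*cv*θ)^2 / (1 - lam) = 0) :
    ell θ (cv - c0 θ) = Real.log (1 - lam) := by
  have hθ0 : θ ≠ 0 := ne_of_gt hθ
  have hhalf : θ - 1/2 ≠ 0 := fun h => hw (by linarith)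
  have hlam0 : (1:ℝ) - lam > 0 := by linarith
  obtain ⟨u, hu⟩ : ∃ u, u = cv - c0 θ := ⟨_, rfl⟩
  have hcv : cv = c0 θ + u := by rw [hu]; ring
  rw [← hu] at h1 h2 h3 ⊢
  rw [hcv] at heq
  have hA : 2*θ - 1 + 2*(c0 θ + u)*θ = 1 + a1 θ*u := by
    rw [a1, c0]; field_simp; ring
  have hB : 2 - 2*θ - (c0 θ + u)*(2*θ-1) = c0 θ*(1 + a2 θ*u) := by
    rw [a2, sc, c0]; field_simp; ring
  have hC : c0 θ + u = c0 θ*(1 + a3 θ*u) := by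
    rw [a3, sc, c0]; field_simp
  have hbase : (c0 θ + u) / ((2*θ - 1 + 2*(c0 θ + u)*θ) * (2 - 2*θ - (c0 θ + u)*(2*θ-1)))
      = (1 + a3 θ*u)/((1 + a1 θ*u)*(1 + a2 θ*u)) := by
    rw [hA, hB]
    rw [div_eq_div_iff (mul_ne_zero h1.ne' (mul_ne_zero (c0_ne hθ h1θ) h2.ne'))
      (mul_ne_zero h1.ne' h2.ne')]
    linear_combination ((1+a1 θ*u)*(1+a2 θ*u))*hC
  rw [hbase, hA] at heq
  have hbasepos : 0 < (1 + a3 θ*u)/((1 + a1 θ*u)*(1 + a2 θ*u)) :=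
    div_pos h3 (mul_pos h1 h2)
  have heq' : ((1 + a3 θ*u)/((1 + a1 θ*u)*(1 + a2 θ*u))) ^ ((1 - θ)/(θ - 1/2))
      = (1 + a1 θ*u)^2 / (1 - lam) := by linarith
  have hlog := congrArg Real.log heq'
  rw [Real.log_rpow hbasepos,
    Real.log_div (pow_ne_zero 2 h1.ne') hlam0.ne',
    Real.log_pow,
    Real.log_div h3.ne' (mul_pos h1 h2).ne',
    Real.log_mul h1.ne' h2.ne'] at hlog
  have hpp : (1 - θ)/(θ - 1/2) = pc θ := by
    rw [pc, div_eq_div_iff hhalf hw]; ring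
  rw [hpp] at hlog
  unfold ell g1 g2 g3
  push_cast at hlog
  linear_combination -hlog

set_option maxHeartbeats 1000000 in
lemma interval_facts (hθ : 0 < θ) (hθhalf : θ ≠ 1/2) (hθone : θ ≠ 1) {cv : ℝ}
    (hm : cv ∈ noTradeInterval θ) :
    0 < cv - c0 θ ∧ 0 < 1+a1 θ*(cv - c0 θ) ∧ 0 < 1+a2 θ*(cv - c0 θ)
      ∧ 0 < 1+a3 θ*(cv - c0 θ) := by
  have hθ0 : θ ≠ 0 := ne_of_gt hθ
  by_cases h12 : θ < 1/2
  · have h1θ' : (0:ℝ) < 1-θ := by linarith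
    have h1θ : (1:ℝ) - θ ≠ 0 := h1θ'.ne'
    simp only [noTradeInterval, if_pos h12, Set.mem_Ioi] at hm
    have hcv0 : 0 < cv := lt_trans (div_pos h1θ' hθ) hm
    have hupos : 0 < cv - c0 θ := by rw [c0]; linarith
    refine ⟨hupos, ?_, ?_, ?_⟩
    · rw [a1]
      have := mul_pos hθ hupos
      linarith
    · have hid : 1 + a2 θ*(cv - c0 θ) = θ*(2*(1-θ) - (2*θ-1)*cv)/(1-θ) := by
        rw [a2, sc, c0]; field_simp; ring
      rw [hid]
      apply div_pos _ h1θ'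
      apply mul_pos hθ
      nlinarith
    · have hid : 1 + a3 θ*(cv - c0 θ) = θ*cv/(1-θ) := by
        rw [a3, sc, c0]; field_simp; ring
      rw [hid]
      exact div_pos (mul_pos hθ hcv0) h1θ'
  · by_cases hlt1 : θ < 1
    · have hhalfgt : 1/2 < θ := lt_of_le_of_ne (not_lt.mp h12) (Ne.symm hθhalf)
      have h1θ' : (0:ℝ) < 1-θ := by linarith
      have h1θ : (1:ℝ) - θ ≠ 0 := h1θ'.ne'
      simp only [noTradeInterval, if_neg h12, if_pos hlt1, Set.mem_Ioo] at hm
      obtain ⟨hm1, hm2⟩ := hm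
      have hcv0 : 0 < cv := lt_trans (div_pos h1θ' hθ) hm1
      have hupos : 0 < cv - c0 θ := by rw [c0]; linarith
      have h2' : (0:ℝ) < θ - 1/2 := by linarith
      rw [lt_div_iff₀ h2'] at hm2
      have hkey2 : (2*θ-1)*cv < 2*(1-θ) := by nlinarith
      refine ⟨hupos, ?_, ?_, ?_⟩
      · rw [a1]
        have := mul_pos hθ hupos
        linarith
      · have hid : 1 + a2 θ*(cv - c0 θ) = θ*(2*(1-θ) - (2*θ-1)*cv)/(1-θ) := by
          rw [a2, sc, c0]; field_simp; ring
        rw [hid]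
        apply div_pos _ h1θ'
        apply mul_pos hθ
        linarith
      · have hid : 1 + a3 θ*(cv - c0 θ) = θ*cv/(1-θ) := by
          rw [a3, sc, c0]; field_simp; ring
        rw [hid]
        exact div_pos (mul_pos hθ hcv0) h1θ'
    · have hθgt : 1 < θ := lt_of_le_of_ne (not_lt.mp hlt1) (Ne.symm hθone)
      have h1θ' : 1-θ < 0 := by linarith
      have h1θ : (1:ℝ) - θ ≠ 0 := h1θ'.ne
      simp only [noTradeInterval, if_neg h12, if_neg hlt1, Set.mem_Ioo] at hm
      obtain ⟨hm1, hm2⟩ := hm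
      have hupos : 0 < cv - c0 θ := by rw [c0]; linarith [hm1]
      have hm1' : 1-θ < cv*θ := by
        rw [div_lt_iff₀ hθ] at hm1
        linarith
      refine ⟨hupos, ?_, ?_, ?_⟩
      · rw [a1]
        have := mul_pos hθ hupos
        linarith
      · have hid : 1 + a2 θ*(cv - c0 θ) = θ*(2*(1-θ) - (2*θ-1)*cv)/(1-θ) := by
          rw [a2, sc, c0]; field_simp; ring
        rw [hid]
        rw [div_pos_iff]
        refine Or.inr ⟨?_, h1θ'⟩
        nlinarith [mul_lt_mul_of_pos_left hm1' (show (0:ℝ) < 2*θ-1 by linarith)]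
      · have hid : 1 + a3 θ*(cv - c0 θ) = θ*cv/(1-θ) := by
          rw [a3, sc, c0]; field_simp; ring
        rw [hid]
        rw [div_pos_iff]
        exact Or.inr ⟨mul_neg_of_pos_of_neg hθ hm2, h1θ'⟩

lemma log_one_sub_le (lam : ℝ) (h1 : lam < 1) : Real.log (1-lam) ≤ -lam := by
  have h := Real.log_le_sub_one_of_pos (by linarith : (0:ℝ) < 1-lam)
  linarith

lemma log_one_sub_ge (lam : ℝ) (h0 : 0 < lam) (h12 : lam ≤ 1/2) :
    -lam - 2*lam^2 ≤ Real.log (1-lam) := by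
  have habs : |lam| < 1 := by rw [abs_of_pos h0]; linarith
  have h := Real.abs_log_sub_add_sum_range_le habs 1
  simp [Finset.sum_range_succ] at h
  rw [abs_of_pos h0] at h
  have h2 : lam^2/(1-lam) ≤ 2*lam^2 := by
    rw [div_le_iff₀ (by linarith)]
    nlinarith [sq_nonneg lam]
  have h3 := (abs_le.mp h).1
  linarith

end Analytic
end GOC


set_option maxHeartbeats 1000000 in
theorem growth_optimal_c_expansion
    (θ α : ℝ) (hθ : 0 < θ) (hθhalf : θ ≠ 1/2) (hθone : θ ≠ 1)
    (hα : α^3 = 6/(θ*(1 - θ)))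
    (c : ℝ → ℝ)
    (hc : ∀ lam ∈ Set.Ioo (0:ℝ) 1, c lam ∈ noTradeInterval θ ∧
      (c lam / ((2*θ - 1 + 2*(c lam)*θ) * (2 - 2*θ - (c lam)*(2*θ - 1)))) ^ ((1 - θ)/(θ - 1/2))
        - (2*θ - 1 + 2*(c lam)*θ)^2 / (1 - lam) = 0) :
    (fun lam : ℝ => c lam -
        ((1 - θ)/θ + ((1 - θ)/(2*θ)) * α * lam ^ ((1:ℝ)/3)
          + ((1 - θ)^2/(4*θ)) * α^2 * lam ^ ((2:ℝ)/3)
          - (1/(40*θ)) * (θ - 2) * (θ - 1) * (3*θ - 2) * α^3 * lam))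
      =O[nhdsWithin 0 (Set.Ioi 0)] (fun lam : ℝ => lam ^ ((4:ℝ)/3)) := by
  have hθ0 : θ ≠ 0 := ne_of_gt hθ
  have h1θ : (1:ℝ) - θ ≠ 0 := sub_ne_zero_of_ne (Ne.symm hθone)
  have hw : 2*θ - 1 ≠ 0 := fun h => hθhalf (by linarith)
  have hb3neg := GOC.b3neg hθ h1θ hw
  have hk1pos := GOC.k1pos hθ h1θ hw hα
  have hcond1 := GOC.cond1 hθ h1θ hw hα
  have hcond2 := GOC.cond2 (α := α) hθ h1θ hw
  have hcond3 := GOC.cond3 (α := α) hθ h1θ hw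
  have hanti := GOC.ell_anti hθ h1θ hw
  have hKnn : 0 ≤ GOC.Kc θ := by
    rw [GOC.Kc]
    positivity
  have hYpos : 0 < 3*(-(GOC.b3 θ))*(GOC.k1 θ α)^2 := by
    have hb : 0 < -(GOC.b3 θ) := neg_pos.mpr hb3neg
    have := mul_pos (mul_pos (by norm_num : (0:ℝ) < 3) hb) (pow_pos hk1pos 2)
    linarith
  have hCkey : 3*(-(GOC.b3 θ))*(GOC.k1 θ α)^2 * GOC.CC θ α
      = |GOC.d6 θ α| + GOC.Kc θ*(GOC.k1 θ α)^6 + 3 := by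
    rw [GOC.CC, mul_comm, div_mul_cancel₀ _ hYpos.ne']
  have hCpos : 0 < GOC.CC θ α := by
    rw [GOC.CC]
    apply div_pos _ hYpos
    have h1 : 0 ≤ |GOC.d6 θ α| := abs_nonneg _
    have h2 : 0 ≤ GOC.Kc θ*(GOC.k1 θ α)^6 := mul_nonneg hKnn (by positivity)
    linarith
  -- x = lam^{1/3} tends to 0
  have hXcont : ContinuousAt (fun y : ℝ => y ^ ((1:ℝ)/3)) 0 :=
    Real.continuousAt_rpow_const 0 _ (Or.inr (by norm_num))
  have hX0 : (0:ℝ) ^ ((1:ℝ)/3) = 0 := Real.zero_rpow (by norm_num)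
  have hXto : Tendsto (fun lam : ℝ => lam ^ ((1:ℝ)/3)) (nhdsWithin 0 (Set.Ioi 0)) (nhds 0) := by
    have h : Tendsto (fun y : ℝ => y ^ ((1:ℝ)/3)) (nhdsWithin 0 (Set.Ioi 0))
        (nhds ((0:ℝ) ^ ((1:ℝ)/3))) := hXcont.tendsto.mono_left nhdsWithin_le_nhds
    rwa [hX0] at h
  -- continuous comparison functions
  have hφmcont : Continuous (fun x : ℝ =>
      GOC.k1 θ α + GOC.k2 θ α*x + GOC.k3 θ α*x^2 - GOC.CC θ α*x^3) := by continuity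
  have hφpcont : Continuous (fun x : ℝ =>
      GOC.k1 θ α + GOC.k2 θ α*x + GOC.k3 θ α*x^2 + GOC.CC θ α*x^3) := by continuity
  -- eventual facts
  have ev0 : ∀ᶠ lam in nhdsWithin 0 (Set.Ioi 0), lam ∈ Set.Ioo (0:ℝ) (1/2) :=
    Ioo_mem_nhdsGT_of_mem ⟨le_rfl, by norm_num⟩
  have ev1 : ∀ᶠ lam in nhdsWithin 0 (Set.Ioi 0),
      0 < GOC.k1 θ α + GOC.k2 θ α*(lam ^ ((1:ℝ)/3)) + GOC.k3 θ α*(lam ^ ((1:ℝ)/3))^2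
          - GOC.CC θ α*(lam ^ ((1:ℝ)/3))^3 := by
    have ht := (hφmcont.tendsto 0).comp hXto
    simp only [Function.comp_def] at ht
    norm_num at ht
    exact ht.eventually_const_lt hk1pos
  have ev2 : ∀ᶠ lam in nhdsWithin 0 (Set.Ioi 0),
      (lam ^ ((1:ℝ)/3)) * (GOC.k1 θ α + GOC.k2 θ α*(lam ^ ((1:ℝ)/3))
        + GOC.k3 θ α*(lam ^ ((1:ℝ)/3))^2 + GOC.CC θ α*(lam ^ ((1:ℝ)/3))^3) ≤ GOC.del θ := by
    have hc2 : Continuous (fun x : ℝ => x * (GOC.k1 θ α + GOC.k2 θ α*x + GOC.k3 θ α*x^2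
        + GOC.CC θ α*x^3)) := by continuity
    have ht := (hc2.tendsto 0).comp hXto
    simp only [Function.comp_def] at ht
    norm_num at ht
    exact (ht.eventually_lt_const GOC.del_pos).mono (fun lam h => h.le)
  have ev3 : ∀ᶠ lam in nhdsWithin 0 (Set.Ioi 0),
      GOC.sPoly (GOC.b3 θ) (GOC.b4 θ) (GOC.b5 θ) (GOC.k1 θ α) (GOC.k2 θ α) (GOC.k3 θ α)
          (GOC.CC θ α) (lam ^ ((1:ℝ)/3))
        + GOC.Kc θ*(GOC.k1 θ α + GOC.k2 θ α*(lam ^ ((1:ℝ)/3)) + GOC.k3 θ α*(lam ^ ((1:ℝ)/3))^2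
          + GOC.CC θ α*(lam ^ ((1:ℝ)/3))^3)^6 + 2 < 0 := by
    have hc3 : Continuous (fun x : ℝ =>
        GOC.sPoly (GOC.b3 θ) (GOC.b4 θ) (GOC.b5 θ) (GOC.k1 θ α) (GOC.k2 θ α) (GOC.k3 θ α)
          (GOC.CC θ α) x
        + GOC.Kc θ*(GOC.k1 θ α + GOC.k2 θ α*x + GOC.k3 θ α*x^2 + GOC.CC θ α*x^3)^6 + 2) :=
      ((GOC.sPoly_cont _ _ _ _ _ _ _).add
        (continuous_const.mul (hφpcont.pow 6))).add continuous_const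
    have ht := (hc3.tendsto 0).comp hXto
    simp only [Function.comp_def] at ht
    refine ht.eventually_lt_const ?_
    show GOC.sPoly (GOC.b3 θ) (GOC.b4 θ) (GOC.b5 θ) (GOC.k1 θ α) (GOC.k2 θ α) (GOC.k3 θ α)
          (GOC.CC θ α) 0
        + GOC.Kc θ*(GOC.k1 θ α + GOC.k2 θ α*0 + GOC.k3 θ α*0^2 + GOC.CC θ α*0^3)^6 + 2 < 0
    rw [GOC.sPoly_zero, ← GOC.d6]
    have hkey2 : 3*GOC.b3 θ*(GOC.k1 θ α)^2*GOC.CC θ α + |GOC.d6 θ α|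
        + GOC.Kc θ*(GOC.k1 θ α)^6 + 3 = 0 := by linear_combination -hCkey
    have habs := le_abs_self (GOC.d6 θ α)
    have hz : (GOC.k1 θ α + GOC.k2 θ α*0 + GOC.k3 θ α*0^2 + GOC.CC θ α*0^3)^6
        = (GOC.k1 θ α)^6 := by ring
    rw [hz]
    linarith
  have ev4 : ∀ᶠ lam in nhdsWithin 0 (Set.Ioi 0),
      0 < GOC.sPoly (GOC.b3 θ) (GOC.b4 θ) (GOC.b5 θ) (GOC.k1 θ α) (GOC.k2 θ α) (GOC.k3 θ α)
          (-(GOC.CC θ α)) (lam ^ ((1:ℝ)/3))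
        - GOC.Kc θ*(GOC.k1 θ α + GOC.k2 θ α*(lam ^ ((1:ℝ)/3)) + GOC.k3 θ α*(lam ^ ((1:ℝ)/3))^2
          - GOC.CC θ α*(lam ^ ((1:ℝ)/3))^3)^6 := by
    have hc4 : Continuous (fun x : ℝ =>
        GOC.sPoly (GOC.b3 θ) (GOC.b4 θ) (GOC.b5 θ) (GOC.k1 θ α) (GOC.k2 θ α) (GOC.k3 θ α)
          (-(GOC.CC θ α)) x
        - GOC.Kc θ*(GOC.k1 θ α + GOC.k2 θ α*x + GOC.k3 θ α*x^2 - GOC.CC θ α*x^3)^6) :=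
      (GOC.sPoly_cont _ _ _ _ _ _ _).sub (continuous_const.mul (hφmcont.pow 6))
    have ht := (hc4.tendsto 0).comp hXto
    simp only [Function.comp_def] at ht
    refine ht.eventually_const_lt ?_
    show (0:ℝ) < GOC.sPoly (GOC.b3 θ) (GOC.b4 θ) (GOC.b5 θ) (GOC.k1 θ α) (GOC.k2 θ α)
          (GOC.k3 θ α) (-(GOC.CC θ α)) 0
        - GOC.Kc θ*(GOC.k1 θ α + GOC.k2 θ α*0 + GOC.k3 θ α*0^2 - GOC.CC θ α*0^3)^6
    rw [GOC.sPoly_zero, ← GOC.d6]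
    have hkey2 : 3*GOC.b3 θ*(GOC.k1 θ α)^2*(-(GOC.CC θ α)) - |GOC.d6 θ α|
        - GOC.Kc θ*(GOC.k1 θ α)^6 - 3 = 0 := by linear_combination hCkey
    have habs := neg_abs_le (GOC.d6 θ α)
    have hz : (GOC.k1 θ α + GOC.k2 θ α*0 + GOC.k3 θ α*0^2 - GOC.CC θ α*0^3)^6
        = (GOC.k1 θ α)^6 := by ring
    rw [hz]
    linarith
  -- main estimate
  rw [Asymptotics.isBigO_iff]
  refine ⟨GOC.CC θ α, ?_⟩
  filter_upwards [ev0, ev1, ev2, ev3, ev4] with lam h0 h1 h2 h3 h4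
  obtain ⟨hlam0, hlam12⟩ := h0
  have hlam1 : lam < 1 := by linarith
  obtain ⟨hmem, heqc⟩ := hc lam ⟨hlam0, hlam1⟩
  obtain ⟨hu0, hp1, hp2, hp3⟩ := GOC.interval_facts hθ hθhalf hθone hmem
  have hell : GOC.ell θ (c lam - GOC.c0 θ) = Real.log (1-lam) :=
    GOC.eq_to_ell hθ h1θ hw hlam1 hp1 hp2 hp3 heqc
  have huV : (c lam - GOC.c0 θ) ∈ GOC.Vset θ := GOC.mem_Vset hu0.le hp1 hp2 hp3
  set x := lam ^ ((1:ℝ)/3) with hxd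
  have hx0 : 0 < x := Real.rpow_pos_of_pos hlam0 _
  have hx3 : x^3 = lam := by
    rw [hxd, ← Real.rpow_natCast (lam ^ ((1:ℝ)/3)) 3, ← Real.rpow_mul hlam0.le]
    norm_num
  have hx2 : lam ^ ((2:ℝ)/3) = x^2 := by
    rw [hxd, ← Real.rpow_natCast (lam ^ ((1:ℝ)/3)) 2, ← Real.rpow_mul hlam0.le]
    norm_num
  have hx4 : lam ^ ((4:ℝ)/3) = x^4 := by
    rw [hxd, ← Real.rpow_natCast (lam ^ ((1:ℝ)/3)) 4, ← Real.rpow_mul hlam0.le]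
    norm_num
  clear hc heqc hmem hXcont hX0 hXto hφmcont hφpcont ev0 ev1 ev2 ev3 ev4
  -- abbreviations
  have hx6 : 0 < x^6 := pow_pos hx0 6
  have hC4 : 0 < GOC.CC θ α * x^4 := mul_pos hCpos (pow_pos hx0 4)
  have hsplit2 : x*(GOC.k1 θ α + GOC.k2 θ α*x + GOC.k3 θ α*x^2 + GOC.CC θ α*x^3)
      = x*(GOC.k1 θ α + GOC.k2 θ α*x + GOC.k3 θ α*x^2 - GOC.CC θ α*x^3)
        + 2*(GOC.CC θ α * x^4) := by ring
  have hvm_pos : 0 < x*(GOC.k1 θ α + GOC.k2 θ α*x + GOC.k3 θ α*x^2 - GOC.CC θ α*x^3) :=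
    mul_pos hx0 h1
  have hvp_pos : 0 < x*(GOC.k1 θ α + GOC.k2 θ α*x + GOC.k3 θ α*x^2 + GOC.CC θ α*x^3) := by
    rw [hsplit2]; linarith
  have hvm_le_vp : x*(GOC.k1 θ α + GOC.k2 θ α*x + GOC.k3 θ α*x^2 - GOC.CC θ α*x^3)
      ≤ x*(GOC.k1 θ α + GOC.k2 θ α*x + GOC.k3 θ α*x^2 + GOC.CC θ α*x^3) := by
    rw [hsplit2]; linarith
  have hvp_del : x*(GOC.k1 θ α + GOC.k2 θ α*x + GOC.k3 θ α*x^2 + GOC.CC θ α*x^3)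
      ≤ GOC.del θ := h2
  have hvpV : x*(GOC.k1 θ α + GOC.k2 θ α*x + GOC.k3 θ α*x^2 + GOC.CC θ α*x^3) ∈ GOC.Vset θ :=
    GOC.mem_Vset_of_le_del hvp_pos.le hvp_del
  have hvmV : x*(GOC.k1 θ α + GOC.k2 θ α*x + GOC.k3 θ α*x^2 - GOC.CC θ α*x^3) ∈ GOC.Vset θ :=
    GOC.mem_Vset_of_le_del hvm_pos.le (le_trans hvm_le_vp hvp_del)
  -- Taylor estimates
  have tayp := GOC.ell_taylor hθ h1θ hw
    (x*(GOC.k1 θ α + GOC.k2 θ α*x + GOC.k3 θ α*x^2 + GOC.CC θ α*x^3)) hvp_pos.le hvp_del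
  have taym := GOC.ell_taylor hθ h1θ hw
    (x*(GOC.k1 θ α + GOC.k2 θ α*x + GOC.k3 θ α*x^2 - GOC.CC θ α*x^3)) hvm_pos.le
    (le_trans hvm_le_vp hvp_del)
  -- factorization
  have factp := GOC.phi_factor (GOC.b3 θ) (GOC.b4 θ) (GOC.b5 θ) (GOC.k1 θ α) (GOC.k2 θ α)
    (GOC.k3 θ α) (GOC.CC θ α) x hcond1 hcond2 hcond3
  have factm' := GOC.phi_factor (GOC.b3 θ) (GOC.b4 θ) (GOC.b5 θ) (GOC.k1 θ α) (GOC.k2 θ α)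
    (GOC.k3 θ α) (-(GOC.CC θ α)) x hcond1 hcond2 hcond3
  have factm : GOC.b3 θ*(x*(GOC.k1 θ α + GOC.k2 θ α*x + GOC.k3 θ α*x^2 - GOC.CC θ α*x^3))^3
      + GOC.b4 θ*(x*(GOC.k1 θ α + GOC.k2 θ α*x + GOC.k3 θ α*x^2 - GOC.CC θ α*x^3))^4
      + GOC.b5 θ*(x*(GOC.k1 θ α + GOC.k2 θ α*x + GOC.k3 θ α*x^2 - GOC.CC θ α*x^3))^5 + x^3
      = x^6 * GOC.sPoly (GOC.b3 θ) (GOC.b4 θ) (GOC.b5 θ) (GOC.k1 θ α) (GOC.k2 θ α)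
          (GOC.k3 θ α) (-(GOC.CC θ α)) x := by
    rw [show x*(GOC.k1 θ α + GOC.k2 θ α*x + GOC.k3 θ α*x^2 - GOC.CC θ α*x^3)
        = x*(GOC.k1 θ α + GOC.k2 θ α*x + GOC.k3 θ α*x^2 + (-(GOC.CC θ α))*x^3) from by ring]
    exact factm'
  clear factm' hcond1 hcond2 hcond3
  -- log bounds
  have hlog_le : Real.log (1-lam) ≤ -lam := GOC.log_one_sub_le lam hlam1
  have hlog_ge : -lam - 2*lam^2 ≤ Real.log (1-lam) :=
    GOC.log_one_sub_ge lam hlam0 hlam12.le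
  have hl2 : lam^2 = x^6 := by rw [← hx3]; ring
  -- upper comparison: ell v₊ < log(1-lam)
  have hup : GOC.ell θ (x*(GOC.k1 θ α + GOC.k2 θ α*x + GOC.k3 θ α*x^2 + GOC.CC θ α*x^3))
      < Real.log (1-lam) := by
    have e1 := (abs_le.mp tayp).2
    have hdist1 : GOC.Kc θ*(x*(GOC.k1 θ α + GOC.k2 θ α*x + GOC.k3 θ α*x^2 + GOC.CC θ α*x^3))^6
        = x^6*(GOC.Kc θ*(GOC.k1 θ α + GOC.k2 θ α*x + GOC.k3 θ α*x^2 + GOC.CC θ α*x^3)^6) := by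
      ring
    have hmul : x^6*(GOC.sPoly (GOC.b3 θ) (GOC.b4 θ) (GOC.b5 θ) (GOC.k1 θ α) (GOC.k2 θ α)
          (GOC.k3 θ α) (GOC.CC θ α) x
        + GOC.Kc θ*(GOC.k1 θ α + GOC.k2 θ α*x + GOC.k3 θ α*x^2 + GOC.CC θ α*x^3)^6 + 2) < 0 :=
      mul_neg_of_pos_of_neg hx6 h3
    have hdist2 : x^6*(GOC.sPoly (GOC.b3 θ) (GOC.b4 θ) (GOC.b5 θ) (GOC.k1 θ α) (GOC.k2 θ α)
          (GOC.k3 θ α) (GOC.CC θ α) x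
        + GOC.Kc θ*(GOC.k1 θ α + GOC.k2 θ α*x + GOC.k3 θ α*x^2 + GOC.CC θ α*x^3)^6 + 2)
        = x^6*GOC.sPoly (GOC.b3 θ) (GOC.b4 θ) (GOC.b5 θ) (GOC.k1 θ α) (GOC.k2 θ α)
          (GOC.k3 θ α) (GOC.CC θ α) x
        + x^6*(GOC.Kc θ*(GOC.k1 θ α + GOC.k2 θ α*x + GOC.k3 θ α*x^2 + GOC.CC θ α*x^3)^6)
        + 2*x^6 := by ring
    linarith [e1, factp, hdist1, hmul, hdist2, hlog_ge, hx3, hl2]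
  -- lower comparison: log(1-lam) < ell v₋
  have hdn : Real.log (1-lam)
      < GOC.ell θ (x*(GOC.k1 θ α + GOC.k2 θ α*x + GOC.k3 θ α*x^2 - GOC.CC θ α*x^3)) := by
    have e1m := (abs_le.mp taym).1
    have hdist1m : GOC.Kc θ*(x*(GOC.k1 θ α + GOC.k2 θ α*x + GOC.k3 θ α*x^2 - GOC.CC θ α*x^3))^6
        = x^6*(GOC.Kc θ*(GOC.k1 θ α + GOC.k2 θ α*x + GOC.k3 θ α*x^2 - GOC.CC θ α*x^3)^6) := by
      ring
    have hmulm : 0 < x^6*(GOC.sPoly (GOC.b3 θ) (GOC.b4 θ) (GOC.b5 θ) (GOC.k1 θ α) (GOC.k2 θ α)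
          (GOC.k3 θ α) (-(GOC.CC θ α)) x
        - GOC.Kc θ*(GOC.k1 θ α + GOC.k2 θ α*x + GOC.k3 θ α*x^2 - GOC.CC θ α*x^3)^6) :=
      mul_pos hx6 h4
    have hdist2m : x^6*(GOC.sPoly (GOC.b3 θ) (GOC.b4 θ) (GOC.b5 θ) (GOC.k1 θ α) (GOC.k2 θ α)
          (GOC.k3 θ α) (-(GOC.CC θ α)) x
        - GOC.Kc θ*(GOC.k1 θ α + GOC.k2 θ α*x + GOC.k3 θ α*x^2 - GOC.CC θ α*x^3)^6)
        = x^6*GOC.sPoly (GOC.b3 θ) (GOC.b4 θ) (GOC.b5 θ) (GOC.k1 θ α) (GOC.k2 θ α)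
          (GOC.k3 θ α) (-(GOC.CC θ α)) x
        - x^6*(GOC.Kc θ*(GOC.k1 θ α + GOC.k2 θ α*x + GOC.k3 θ α*x^2 - GOC.CC θ α*x^3)^6) := by
      ring
    linarith [e1m, factm, hdist1m, hmulm, hdist2m, hlog_le, hx3]
  -- conclude ordering via strict antitonicity
  have hlt1 : c lam - GOC.c0 θ
      < x*(GOC.k1 θ α + GOC.k2 θ α*x + GOC.k3 θ α*x^2 + GOC.CC θ α*x^3) := by
    by_contra hcon
    push_neg at hcon
    rcases eq_or_lt_of_le hcon with h'|h'
    · rw [h', hell] at hup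
      exact lt_irrefl _ hup
    · have := hanti hvpV huV h'
      rw [hell] at this
      linarith
  have hlt2 : x*(GOC.k1 θ α + GOC.k2 θ α*x + GOC.k3 θ α*x^2 - GOC.CC θ α*x^3)
      < c lam - GOC.c0 θ := by
    by_contra hcon
    push_neg at hcon
    rcases eq_or_lt_of_le hcon with h'|h'
    · rw [← h', hell] at hdn
      exact lt_irrefl _ hdn
    · have := hanti huV hvmV h'
      rw [hell] at this
      linarith
  -- final bound
  have hvpeq : x*(GOC.k1 θ α + GOC.k2 θ α*x + GOC.k3 θ α*x^2 + GOC.CC θ α*x^3)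
      = (GOC.k1 θ α*x + GOC.k2 θ α*x^2 + GOC.k3 θ α*x^3) + GOC.CC θ α*x^4 := by ring
  have hvmeq : x*(GOC.k1 θ α + GOC.k2 θ α*x + GOC.k3 θ α*x^2 - GOC.CC θ α*x^3)
      = (GOC.k1 θ α*x + GOC.k2 θ α*x^2 + GOC.k3 θ α*x^3) - GOC.CC θ α*x^4 := by ring
  have hfin : |(c lam - GOC.c0 θ)
      - (GOC.k1 θ α*x + GOC.k2 θ α*x^2 + GOC.k3 θ α*x^3)| ≤ GOC.CC θ α*x^4 := by
    rw [abs_le]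
    constructor
    · rw [hvmeq] at hlt2
      linarith
    · rw [hvpeq] at hlt1
      linarith
  rw [Real.norm_eq_abs, Real.norm_eq_abs, hx4,
    abs_of_nonneg (by positivity : (0:ℝ) ≤ x^4)]
  have hEeq : c lam - ((1 - θ)/θ + ((1 - θ)/(2*θ)) * α * x
        + ((1 - θ)^2/(4*θ)) * α^2 * lam ^ ((2:ℝ)/3)
        - (1/(40*θ)) * (θ - 2) * (θ - 1) * (3*θ - 2) * α^3 * lam)
      = (c lam - GOC.c0 θ) - (GOC.k1 θ α*x + GOC.k2 θ α*x^2 + GOC.k3 θ α*x^3) := by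
    rw [GOC.c0, GOC.k1, GOC.k2, GOC.k3, hx2, ← hx3]
    ring
  rw [hEeq]
  exact hfin
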